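/- Let A ∈ C and let the ordered profile v′ be obtained from v by changes of the following kinds only: adding new ballots whose list consists of the single candidate A; inserting A at an arbitrary position into some ballots not containing A; or moving A to an earlier position on some ballots containing A — in each case leaving the other candidates and their relative order on every ballot unchanged. Assume that, under both v and v′, Phragmén's ordered method has a unique minimizer in every round (no ties occur). If A is among the M candidates elected by Phragmén's ordered method on v, then A is among the M candidates elected on v′. -/

import Mathlib

open Finset

/-- The top candidate of the ballot `α` given the set `E` of already elected
candidates: the first entry of `α` not in `E` (if any). -/
def topOf {C : Type} [DecidableEq C] (E : Finset C) (α : List C) : Option C :=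
  α.find? (fun c => decide (c ∉ E))

/-- The set of voters whose ballot is currently counted for candidate `i`,
given the set `E` of already elected candidates. -/
def poCounted {C : Type} [Fintype C] [DecidableEq C] {n : ℕ}
    (b : Fin n → List C) (E : Finset C) (i : C) : Finset (Fin n) :=
  Finset.univ.filter (fun k => topOf E (b k) = some i)

/-- Phragmén's `t_i = (1 + Σ_{α∈A_i} v_α r_α)/(Σ_{α∈A_i} v_α)` for the current
loads `r` and elected set `E` (each individual ballot has weight 1). -/
def poT {C : Type} [Fintype C] [DecidableEq C] {n : ℕ}
    (b : Fin n → List C) (r : Fin n → ℚ) (E : Finset C) (i : C) : ℚ :=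
  (1 + ∑ k ∈ poCounted b E i, r k) / ((poCounted b E i).card : ℚ)

/-- The ballot loads after electing the candidates in the list `l`
(most recently elected first). -/
def poLoads {C : Type} [Fintype C] [DecidableEq C] {n : ℕ}
    (b : Fin n → List C) : List C → Fin n → ℚ
  | [], _ => 0
  | i :: l, k =>
      if topOf l.toFinset (b k) = some i then poT b (poLoads b l) l.toFinset i
      else poLoads b l k

/-- `l` (most recently elected first) is a valid sequence of elections for
Phragmén's ordered method. -/
def poValid {C : Type} [Fintype C] [DecidableEq C] {n : ℕ}
    (b : Fin n → List C) : List C → Prop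
  | [] => True
  | i :: l => poValid b l ∧ i ∉ l ∧ 0 < (poCounted b l.toFinset i).card ∧
      ∀ j : C, j ∉ l → 0 < (poCounted b l.toFinset j).card →
        poT b (poLoads b l) l.toFinset i ≤ poT b (poLoads b l) l.toFinset j

/-- `S` is a possible outcome of Phragmén's ordered method for `M` seats. -/
def POOutcome {C : Type} [Fintype C] [DecidableEq C] {n : ℕ}
    (b : Fin n → List C) (M : ℕ) (S : Finset C) : Prop :=
  ∃ l : List C, poValid b l ∧ l.length = M ∧ l.toFinset = S

/-- `α'` is obtained from `α` by a change in favour of `A`: either `α' = α`, or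
`A` is inserted into `α` at an arbitrary position (if `A ∉ α`), or `A` is moved
to an earlier (or equal) position (if `A ∈ α`); in each case the other candidates
and their relative order are unchanged. -/
def Favours {C : Type} [DecidableEq C] (A : C) (α α' : List C) : Prop :=
  α'.erase A = α.erase A ∧ (A ∈ α → A ∈ α' ∧ α'.idxOf A ≤ α.idxOf A)

/-- Phragmén's ordered method has a unique minimizer in every round (no ties occur)
during the election of `M` candidates. -/
def POUniqueRun {C : Type} [Fintype C] [DecidableEq C] {n : ℕ}
    (b : Fin n → List C) (M : ℕ) : Prop :=
  ∀ l : List C, poValid b l → l.length < M →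
    ∃! i : C, i ∉ l ∧ 0 < (poCounted b l.toFinset i).card ∧
      ∀ j : C, j ∉ l → 0 < (poCounted b l.toFinset j).card →
        poT b (poLoads b l) l.toFinset i ≤ poT b (poLoads b l) l.toFinset j

set_option linter.unusedSectionVars false
namespace PO
variable {C : Type} [DecidableEq C]

theorem topOf_nil (E : Finset C) : topOf E [] = none := rfl

theorem topOf_cons (E : Finset C) (c : C) (α : List C) :
    topOf E (c :: α) = if c ∈ E then topOf E α else some c := by
  by_cases h : c ∈ E
  · rw [if_pos h]
    exact List.find?_cons_of_neg (by simpa using h)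
  · rw [if_neg h]
    exact List.find?_cons_of_pos (by simpa using h)

theorem topOf_eq_some_iff {E : Finset C} {α : List C} {x : C} :
    topOf E α = some x ↔ ∃ u v, α = u ++ x :: v ∧ (∀ e ∈ u, e ∈ E) ∧ x ∉ E := by
  induction α with
  | nil =>
    simp only [topOf_nil]
    constructor
    · intro h; exact absurd h (by simp)
    · rintro ⟨u, v, h, -, -⟩; exact absurd h (by simp)
  | cons c α ih =>
    rw [topOf_cons]
    by_cases h : c ∈ E
    · rw [if_pos h, ih]
      constructor
      · rintro ⟨u, v, rfl, hu, hx⟩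
        exact ⟨c :: u, v, rfl, by simpa [h] using hu, hx⟩
      · rintro ⟨u, v, huv, hu, hx⟩
        cases u with
        | nil =>
          simp only [List.nil_append, List.cons.injEq] at huv
          exact absurd (huv.1 ▸ h) hx
        | cons d u =>
          simp only [List.cons_append, List.cons.injEq] at huv
          exact ⟨u, v, huv.2, fun e he => hu e (by simp [he]), hx⟩
    · rw [if_neg h]
      constructor
      · rintro hcx
        injection hcx with hcx
        exact ⟨[], α, by simp [hcx], by simp, hcx ▸ h⟩
      · rintro ⟨u, v, huv, hu, hx⟩
        cases u with
        | nil =>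
          simp only [List.nil_append, List.cons.injEq] at huv
          rw [huv.1]
        | cons d u =>
          simp only [List.cons_append, List.cons.injEq] at huv
          exact absurd (huv.1 ▸ hu d (by simp)) h

theorem topOf_eq_none_iff {E : Finset C} {α : List C} :
    topOf E α = none ↔ ∀ e ∈ α, e ∈ E := by
  simp [topOf, List.find?_eq_none]

theorem topOf_mono {E E' : Finset C} {α : List C} {x : C} (h : topOf E α = some x)
    (hsub : E ⊆ E') (hx : x ∉ E') : topOf E' α = some x := by
  rw [topOf_eq_some_iff] at h ⊢
  obtain ⟨u, v, rfl, hu, -⟩ := h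
  exact ⟨u, v, rfl, fun e he => hsub (hu e he), hx⟩

theorem topOf_insert {E : Finset C} {j : C} {α : List C} {x : C}
    (h : topOf (insert j E) α = some x) :
    topOf E α = some x ∨ topOf E α = some j := by
  induction α with
  | nil => exact absurd h (by simp [topOf_nil])
  | cons c α ih =>
    rw [topOf_cons] at h ⊢
    by_cases hc : c ∈ E
    · rw [if_pos (Finset.mem_insert_of_mem hc)] at h
      rw [if_pos hc]
      exact ih h
    · by_cases hcj : c = j
      · subst hcj
        rw [if_neg hc]
        right; rfl
      · rw [if_neg (by simp [hc, hcj])] at h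
        rw [if_neg hc]
        left; exact h

def preL (α : List C) (w : C) : List C := α.takeWhile (fun e => decide (e ≠ w))

theorem preL_eq {α u v : List C} {w : C} (h : α = u ++ w :: v) (hw : w ∉ u) :
    preL α w = u := by
  subst h
  induction u with
  | nil =>
    show List.takeWhile _ (w :: v) = []
    rw [List.takeWhile_cons, if_neg (by simp)]
  | cons c u ih =>
    have hcw : c ≠ w := fun hh => hw (by simp [hh])
    show List.takeWhile _ (c :: (u ++ w :: v)) = c :: u
    simp only [preL] at ih
    rw [List.takeWhile_cons, if_pos (by simpa using hcw),
      ih (fun hh => hw (List.mem_cons_of_mem _ hh))]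

theorem mem_preL {α : List C} {w e : C} (h : e ∈ preL α w) : e ∈ α :=
  (List.takeWhile_prefix _).subset h

theorem preL_append {u β : List C} {w : C} (hu : ∀ e ∈ u, e ≠ w) :
    preL (u ++ β) w = u ++ preL β w := by
  induction u with
  | nil => simp
  | cons c u ih =>
    show List.takeWhile _ (c :: (u ++ β)) = c :: (u ++ _)
    simp only [preL] at ih
    rw [List.takeWhile_cons, if_pos (by simpa using hu c (by simp)),
      ih (fun e he => hu e (by simp [he]))]
    rfl

theorem first_occ {a : C} {l : List C} (h : a ∈ l) :
    ∃ s t, l = s ++ a :: t ∧ a ∉ s := by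
  induction l with
  | nil => simp at h
  | cons c l ih =>
    by_cases hca : c = a
    · exact ⟨[], l, by simp [hca], by simp⟩
    · have hal : a ∈ l := by
        rcases List.mem_cons.mp h with h1 | h1
        · exact absurd h1.symm hca
        · exact h1
      obtain ⟨s, t, rfl, hs⟩ := ih hal
      exact ⟨c :: s, t, rfl, by simp [hs, Ne.symm hca]⟩

theorem erase_append_first {a : C} {s t : List C} (hs : a ∉ s) :
    (s ++ a :: t).erase a = s ++ t := by
  induction s with
  | nil => simp
  | cons c s ih =>
    have hca : c ≠ a := fun hh => hs (by simp [hh])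
    rw [List.cons_append, List.erase_cons_tail (by simpa using hca),
      ih (fun hh => hs (List.mem_cons_of_mem _ hh))]
    rfl

theorem indexOf_first {a : C} {s t : List C} (hs : a ∉ s) :
    (s ++ a :: t).idxOf a = s.length := by
  induction s with
  | nil => simp
  | cons c s ih =>
    have hca : c ≠ a := fun hh => hs (by simp [hh])
    rw [List.cons_append, List.idxOf_cons_ne _ (by simpa using hca),
      ih (fun hh => hs (List.mem_cons_of_mem _ hh))]
    rfl

theorem take_le_indexOf_erase {a : C} {α : List C} :
    ∀ {j : ℕ}, j ≤ α.idxOf a → α.take j = (α.erase a).take j := by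
  induction α with
  | nil => simp
  | cons c α ih =>
    intro j hj
    by_cases hca : c = a
    · subst hca
      have hj0 : j = 0 := by simpa [List.idxOf_cons_self] using hj
      simp [hj0]
    · rw [List.erase_cons_tail (by simpa using hca)]
      cases j with
      | zero => simp
      | succ j =>
        rw [List.idxOf_cons_ne _ (by simpa using hca)] at hj
        rw [List.take_succ_cons, List.take_succ_cons, ih (by omega)]

theorem favours_eq {A : C} {α α' : List C} (hf : Favours A α α') (hA : A ∉ α') :
    α' = α := by
  obtain ⟨h1, h2⟩ := hf
  have hAα : A ∉ α := fun h => hA (h2 h).1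
  rwa [List.erase_of_not_mem hAα, List.erase_of_not_mem hA] at h1

theorem transfer {A : C} {α α' : List C} {E' : Finset C} {w : C}
    (hf : Favours A α α') (hA : A ∉ E') (htop : topOf E' α' = some w) (hwA : w ≠ A) :
    (∀ e ∈ preL α w, e ∈ E') ∧ preL α' w = preL α w ∧
      ∀ E : Finset C, E' ⊆ E → w ∉ E → topOf E α = some w := by
  obtain ⟨u, v, hα', hu, hwE⟩ := topOf_eq_some_iff.mp htop
  have hwu : w ∉ u := fun h => hwE (hu w h)
  have hpre' : preL α' w = u := preL_eq hα' hwu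
  have hAu : A ∉ u := fun h => hA (hu A h)
  have key : ∃ v', α = u ++ w :: v' := by
    by_cases hAα' : A ∈ α'
    · have hAv : A ∈ v := by
        rw [hα'] at hAα'
        rcases List.mem_append.mp hAα' with h1 | h1
        · exact absurd h1 hAu
        · rcases List.mem_cons.mp h1 with h2 | h2
          · exact absurd h2.symm hwA
          · exact h2
      obtain ⟨v₁, v₂, rfl, hv₁⟩ := first_occ hAv
      have hNotPre : A ∉ u ++ w :: v₁ := by
        simp only [List.mem_append, List.mem_cons]
        push_neg
        exact ⟨hAu, Ne.symm hwA, hv₁⟩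
      have herase' : α'.erase A = u ++ w :: (v₁ ++ v₂) := by
        rw [hα', show u ++ w :: (v₁ ++ A :: v₂) = (u ++ w :: v₁) ++ A :: v₂ by simp,
          erase_append_first hNotPre]
        simp
      have heraseα : α.erase A = u ++ w :: (v₁ ++ v₂) := by rw [← hf.1, herase']
      by_cases hAα : A ∈ α
      · have hidx' : α'.idxOf A = (u ++ w :: v₁).length := by
          rw [hα', show u ++ w :: (v₁ ++ A :: v₂) = (u ++ w :: v₁) ++ A :: v₂ by simp,
            indexOf_first hNotPre]
        have hidx : u.length + 1 ≤ α.idxOf A := by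
          have := (hf.2 hAα).2
          rw [hidx'] at this
          simp only [List.length_append, List.length_cons] at this ⊢
          omega
        have htake : α.take (u.length + 1) = u ++ [w] := by
          rw [take_le_indexOf_erase hidx, heraseα,
            show u ++ w :: (v₁ ++ v₂) = (u ++ [w]) ++ (v₁ ++ v₂) by simp]
          rw [List.take_left' (by simp)]
        refine ⟨α.drop (u.length + 1), ?_⟩
        conv_lhs => rw [← List.take_append_drop (u.length + 1) α]
        rw [htake]
        simp
      · refine ⟨v₁ ++ v₂, ?_⟩
        rw [← List.erase_of_not_mem hAα, heraseα]
    · rw [← favours_eq hf hAα', hα']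
      exact ⟨v, rfl⟩
  obtain ⟨v', hαd⟩ := key
  refine ⟨?_, ?_, ?_⟩
  · rw [preL_eq hαd hwu]
    exact hu
  · rw [hpre', preL_eq hαd hwu]
  · intro E hsub hwnE
    exact topOf_eq_some_iff.mpr ⟨u, v', hαd, fun e he => hsub (hu e he), hwnE⟩

/-! ### max-fold utilities -/

def MX (f : C → ℚ) (P : List C) : ℚ := P.foldr (fun e m => max (f e) m) 0

theorem MX_nonneg (f : C → ℚ) (P : List C) : 0 ≤ MX f P := by
  induction P with
  | nil => exact le_refl 0
  | cons c P ih => exact le_trans ih (le_max_right _ _)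

theorem MX_le {f : C → ℚ} {P : List C} {B : ℚ} (h : ∀ e ∈ P, f e ≤ B) (hB : 0 ≤ B) :
    MX f P ≤ B := by
  induction P with
  | nil => exact hB
  | cons c P ih =>
    exact max_le (h c (by simp)) (ih (fun e he => h e (by simp [he])))

theorem le_MX {f : C → ℚ} {P : List C} {e : C} (h : e ∈ P) : f e ≤ MX f P := by
  induction P with
  | nil => simp at h
  | cons c P ih =>
    rcases List.mem_cons.mp h with h1 | h1
    · rw [h1]; exact le_max_left _ _
    · exact le_trans (ih h1) (le_max_right _ _)

theorem MX_mono {f g : C → ℚ} {P : List C} (h : ∀ e ∈ P, f e ≤ g e) :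
    MX f P ≤ MX g P := by
  induction P with
  | nil => exact le_refl 0
  | cons c P ih =>
    exact max_le_max (h c (by simp)) (ih (fun e he => h e (by simp [he])))

theorem MX_congr {f g : C → ℚ} {P : List C} (h : ∀ e ∈ P, f e = g e) :
    MX f P = MX g P :=
  le_antisymm (MX_mono fun e he => (h e he).le) (MX_mono fun e he => (h e he).ge)

theorem MX_eq {f : C → ℚ} {P : List C} {B : ℚ} {e₀ : C} (he₀ : e₀ ∈ P) (hfe : f e₀ = B)
    (h : ∀ e ∈ P, f e ≤ B) (hB : 0 ≤ B) : MX f P = B :=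
  le_antisymm (MX_le h hB) (hfe ▸ le_MX he₀)

/-! ### suffix utilities -/

theorem suffix_eq_drop {l L : List α} (h : l <:+ L) : l = L.drop (L.length - l.length) := by
  obtain ⟨t, rfl⟩ := h
  rw [List.length_append, Nat.add_sub_cancel, List.drop_left]

theorem suffix_of_suffix_le {l₁ l₂ L : List α} (h₁ : l₁ <:+ L) (h₂ : l₂ <:+ L)
    (hlen : l₁.length ≤ l₂.length) : l₁ <:+ l₂ := by
  have hlen1 : l₁.length ≤ L.length := h₁.length_le
  have hlen2 : l₂.length ≤ L.length := h₂.length_le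
  have harith : L.length - l₂.length + (l₂.length - l₁.length) = L.length - l₁.length := by
    omega
  have key : l₂.drop (l₂.length - l₁.length) = l₁ := by
    conv_lhs => rw [suffix_eq_drop h₂]
    rw [List.drop_drop]
    have hX : L.length - l₂.length + ((List.drop (L.length - l₂.length) L).length - l₁.length)
        = L.length - l₁.length := by
      simp only [List.length_drop]
      omega
    rw [hX, ← suffix_eq_drop h₁]
  rw [← key]
  exact List.drop_suffix _ _

section Runs

variable {C : Type} [Fintype C] [DecidableEq C] {n : ℕ} (b : Fin n → List C)

/-- Time of the most recent election in the run `l`. -/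
def rtime : List C → ℚ
  | [] => 0
  | i :: l => poT b (poLoads b l) l.toFinset i

@[simp] theorem rtime_cons (i : C) (l : List C) :
    rtime b (i :: l) = poT b (poLoads b l) l.toFinset i := rfl

/-- Time at which `e` was elected in the run `l`. -/
def tat : List C → C → ℚ
  | [], _ => 0
  | i :: l, e => if e = i then rtime b (i :: l) else tat l e

variable {b}

theorem poValid_cons {i : C} {l : List C} (h : poValid b (i :: l)) :
    poValid b l ∧ i ∉ l ∧ 0 < (poCounted b l.toFinset i).card ∧
      ∀ j : C, j ∉ l → 0 < (poCounted b l.toFinset j).card →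
        poT b (poLoads b l) l.toFinset i ≤ poT b (poLoads b l) l.toFinset j := h

theorem poLoads_cons {i : C} {l : List C} {k : Fin n} :
    poLoads b (i :: l) k = if topOf l.toFinset (b k) = some i
      then poT b (poLoads b l) l.toFinset i else poLoads b l k := rfl

theorem poValid_of_suffix {l₁ l : List C} (hs : l₁ <:+ l) (h : poValid b l) :
    poValid b l₁ := by
  obtain ⟨t, rfl⟩ := hs
  induction t with
  | nil => exact h
  | cons c t ih => exact ih (poValid_cons h).1

theorem poValid_nodup {l : List C} (h : poValid b l) : l.Nodup := by
  induction l with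
  | nil => exact List.nodup_nil
  | cons i l ih =>
    obtain ⟨hv, hni, -, -⟩ := poValid_cons h
    exact List.nodup_cons.mpr ⟨hni, ih hv⟩

theorem poT_nonneg {r : Fin n → ℚ} {E : Finset C} {i : C} (hr : ∀ k, 0 ≤ r k) :
    0 ≤ poT b r E i := by
  apply div_nonneg _ (Nat.cast_nonneg _)
  have : 0 ≤ ∑ k ∈ poCounted b E i, r k := Finset.sum_nonneg (fun k _ => hr k)
  linarith

theorem poLoads_nonneg (l : List C) : ∀ k, 0 ≤ poLoads b l k := by
  induction l with
  | nil => intro k; exact le_refl 0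
  | cons i l ih =>
    intro k
    rw [poLoads_cons]
    split
    · exact poT_nonneg ih
    · exact ih k

theorem poT_mul {r : Fin n → ℚ} {E : Finset C} {i : C}
    (h : 0 < (poCounted b E i).card) :
    ((poCounted b E i).card : ℚ) * poT b r E i = 1 + ∑ k ∈ poCounted b E i, r k := by
  rw [poT, mul_div_cancel₀]
  exact Nat.cast_ne_zero.mpr h.ne'

theorem rtime_pos {i : C} {l : List C} (h : poValid b (i :: l)) :
    0 < rtime b (i :: l) := by
  obtain ⟨-, -, hcard, -⟩ := poValid_cons h
  rw [rtime_cons, poT]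
  apply div_pos _ (by exact_mod_cast hcard)
  have : 0 ≤ ∑ k ∈ poCounted b l.toFinset i, poLoads b l k :=
    Finset.sum_nonneg (fun k _ => poLoads_nonneg l k)
  linarith

theorem sum_poLoads {l : List C} (h : poValid b l) :
    ∑ k, poLoads b l k = (l.length : ℚ) := by
  induction l with
  | nil => simp [poLoads]
  | cons i l ih =>
    obtain ⟨hv, hni, hcard, -⟩ := poValid_cons h
    set S := poCounted b l.toFinset i with hSdef
    have hsplit : ∑ k, poLoads b (i :: l) k
        = (∑ k ∈ S, poT b (poLoads b l) l.toFinset i) + ∑ k ∈ Sᶜ, poLoads b l k := by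
      rw [← Finset.sum_add_sum_compl S (poLoads b (i :: l))]
      congr 1
      · refine Finset.sum_congr rfl (fun k hk => ?_)
        rw [poLoads_cons, if_pos]
        exact (Finset.mem_filter.mp hk).2
      · refine Finset.sum_congr rfl (fun k hk => ?_)
        rw [poLoads_cons, if_neg]
        have := Finset.mem_compl.mp hk
        intro hc
        exact this (Finset.mem_filter.mpr ⟨Finset.mem_univ _, hc⟩)
    rw [hsplit, Finset.sum_const, nsmul_eq_mul, poT_mul hcard]
    have : ∑ k ∈ Sᶜ, poLoads b l k = (∑ k, poLoads b l k) - ∑ k ∈ S, poLoads b l k := by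
      rw [← Finset.sum_add_sum_compl S (poLoads b l)]
      ring
    rw [this, ih hv]
    simp only [List.length_cons]
    push_cast
    ring

theorem counted_mono {l : List C} {i j : C} {k : Fin n} (hij : i ≠ j)
    (hk : k ∈ poCounted b l.toFinset i) : k ∈ poCounted b (j :: l).toFinset i := by
  rw [poCounted, Finset.mem_filter] at hk ⊢
  refine ⟨Finset.mem_univ _, ?_⟩
  have := hk.2
  apply topOf_mono this
  · intro e he
    rw [List.toFinset_cons]
    exact Finset.mem_insert_of_mem he
  · rw [List.toFinset_cons, Finset.mem_insert]
    push_neg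
    obtain ⟨u, v, -, -, hnot⟩ := topOf_eq_some_iff.mp this
    exact ⟨hij, hnot⟩

/-- Strict increase of election times along a valid run without ties. -/
theorem time_lt {M : ℕ} (hu : POUniqueRun b M) {i j : C} {l : List C}
    (hv : poValid b (i :: j :: l)) (hlen : l.length < M) :
    rtime b (j :: l) < rtime b (i :: j :: l) := by
  obtain ⟨hvjl, hinjl, hcard1, -⟩ := poValid_cons hv
  obtain ⟨hvl, hjnl, hcardj, hminj⟩ := poValid_cons hvjl
  have hij : i ≠ j := fun hc => hinjl (by rw [hc]; exact (List.mem_cons_self (a := j) (l := l)))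
  have hinl : i ∉ l := fun hc => hinjl (List.mem_cons_of_mem _ hc)
  set t₀ := rtime b (j :: l) with ht₀
  set S₀ := poCounted b l.toFinset i with hS₀
  set S₁ := poCounted b (j :: l).toFinset i with hS₁
  have hsub : S₀ ⊆ S₁ := fun k hk => counted_mono hij hk
  have hdiffj : ∀ k ∈ S₁ \ S₀, topOf l.toFinset (b k) = some j := by
    intro k hk
    rw [Finset.mem_sdiff] at hk
    obtain ⟨hk1, hk2⟩ := hk
    rw [hS₁, poCounted, Finset.mem_filter] at hk1
    have := hk1.2
    rw [List.toFinset_cons] at this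
    rcases topOf_insert this with h1 | h1
    · exfalso
      exact hk2 (Finset.mem_filter.mpr ⟨Finset.mem_univ _, h1⟩)
    · exact h1
  have hloads : ∀ k ∈ S₁, poLoads b (j :: l) k
      = if k ∈ S₀ then poLoads b l k else t₀ := by
    intro k hk
    by_cases hk0 : k ∈ S₀
    · rw [if_pos hk0, poLoads_cons, if_neg]
      rw [hS₀, poCounted, Finset.mem_filter] at hk0
      rw [hk0.2]
      exact fun hc => hij (Option.some.inj hc)
    · rw [if_neg hk0, poLoads_cons, if_pos (hdiffj k (Finset.mem_sdiff.mpr ⟨hk, hk0⟩))]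
      rw [ht₀, rtime_cons]
  have hsum : ∑ k ∈ S₁, poLoads b (j :: l) k
      = (∑ k ∈ S₀, poLoads b l k) + ((S₁ \ S₀).card : ℚ) * t₀ := by
    rw [← Finset.sum_sdiff hsub]
    rw [Finset.sum_congr rfl (fun k hk => hloads k (Finset.mem_sdiff.mp hk).1),
      Finset.sum_congr rfl (fun k hk => hloads k (hsub hk))]
    rw [Finset.sum_ite_of_false (fun k hk => (Finset.mem_sdiff.mp hk).2),
      Finset.sum_ite_of_true (fun k hk => hk)]
    rw [Finset.sum_const, nsmul_eq_mul]
    ring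
  have hcards : (S₁.card : ℚ) = (S₀.card : ℚ) + ((S₁ \ S₀).card : ℚ) := by
    rw [Finset.card_sdiff_of_subset hsub]
    have := Finset.card_le_card hsub
    push_cast [Nat.cast_sub this]
    ring
  have ht₁ : rtime b (i :: j :: l) = (1 + ((∑ k ∈ S₀, poLoads b l k)
      + ((S₁ \ S₀).card : ℚ) * t₀)) / (S₁.card : ℚ) := by
    rw [rtime_cons, poT, ← hS₁, hsum]
  have hS₁pos : (0 : ℚ) < (S₁.card : ℚ) := by exact_mod_cast hcard1
  by_cases hc₀ : S₀.card = 0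
  · have hS₀empty : S₀ = ∅ := Finset.card_eq_zero.mp hc₀
    rw [ht₁, lt_div_iff₀ hS₁pos]
    have h1 : ∑ k ∈ S₀, poLoads b l k = 0 := by rw [hS₀empty]; simp
    have h2 : (((S₁ \ S₀).card : ℕ) : ℚ) = ((S₁.card : ℕ) : ℚ) := by
      rw [hS₀empty, Finset.sdiff_empty]
    rw [h1, h2]
    nlinarith [hS₁pos]
  · have hc₀pos : 0 < S₀.card := Nat.pos_of_ne_zero hc₀
    have hq : t₀ < poT b (poLoads b l) l.toFinset i := by
      rcases lt_or_ge t₀ (poT b (poLoads b l) l.toFinset i) with h1 | h1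
      · exact h1
      · exfalso
        have hQi : i ∉ l ∧ 0 < (poCounted b l.toFinset i).card ∧
            ∀ y : C, y ∉ l → 0 < (poCounted b l.toFinset y).card →
              poT b (poLoads b l) l.toFinset i ≤ poT b (poLoads b l) l.toFinset y := by
          refine ⟨hinl, hc₀pos, fun y hy hcy => ?_⟩
          exact le_trans h1 (hminj y hy hcy)
        have hQj : j ∉ l ∧ 0 < (poCounted b l.toFinset j).card ∧
            ∀ y : C, y ∉ l → 0 < (poCounted b l.toFinset y).card →
              poT b (poLoads b l) l.toFinset j ≤ poT b (poLoads b l) l.toFinset y :=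
          ⟨hjnl, hcardj, hminj⟩
        obtain ⟨x, -, hxuniq⟩ := hu l hvl hlen
        exact hij ((hxuniq i hQi).trans (hxuniq j hQj).symm)
    have hqmul : (1 : ℚ) + ∑ k ∈ S₀, poLoads b l k
        = (S₀.card : ℚ) * poT b (poLoads b l) l.toFinset i := by
      rw [poT_mul hc₀pos]
    have hc₀Q : (0 : ℚ) < (S₀.card : ℚ) := by exact_mod_cast hc₀pos
    rw [ht₁, lt_div_iff₀ hS₁pos]
    have hd : (0 : ℚ) ≤ ((S₁ \ S₀).card : ℚ) := Nat.cast_nonneg _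
    have hprod : ((S₀.card : ℕ) : ℚ) * t₀ < ((S₀.card : ℕ) : ℚ)
        * poT b (poLoads b l) l.toFinset i := mul_lt_mul_of_pos_left hq hc₀Q
    have hexp : t₀ * ((S₁.card : ℕ) : ℚ)
        = ((S₀.card : ℕ) : ℚ) * t₀ + ((S₁ \ S₀).card : ℚ) * t₀ := by
      rw [hcards]; ring
    linarith [hexp, hprod, hqmul]

theorem time_lt_of_suffix {M : ℕ} (hu : POUniqueRun b M) {L : List C}
    (hL : poValid b L) (hlen : L.length ≤ M) :
    ∀ (v u : List C), u <:+ v → v <:+ L → u ≠ [] → u ≠ v → rtime b u < rtime b v := by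
  intro v
  induction v with
  | nil =>
    intro u huv _ hne _
    exact absurd (List.suffix_nil.mp huv) hne
  | cons x v ih =>
    intro u huv hvL hne hneq
    rcases List.suffix_cons_iff.mp huv with h | h
    · exact absurd h hneq
    · cases v with
      | nil => exact absurd (List.suffix_nil.mp h) hne
      | cons y v' =>
        have hvL' : (y :: v') <:+ L := (List.suffix_cons x (y :: v')).trans hvL
        have hstep : rtime b (y :: v') < rtime b (x :: y :: v') := by
          apply time_lt hu (poValid_of_suffix hvL hL)
          have := hvL.length_le
          simp only [List.length_cons] at this
          omega
        by_cases hcase : u = y :: v'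
        · rw [hcase]; exact hstep
        · exact lt_trans (ih u h hvL' hne hcase) hstep

theorem time_le_of_suffix {M : ℕ} (hu : POUniqueRun b M) {L : List C}
    (hL : poValid b L) (hlen : L.length ≤ M) {u v : List C} (huv : u <:+ v)
    (hvL : v <:+ L) (hne : u ≠ []) : rtime b u ≤ rtime b v := by
  by_cases h : u = v
  · rw [h]
  · exact (time_lt_of_suffix hu hL hlen v u huv hvL hne h).le

theorem tat_head (i : C) (l : List C) : tat b (i :: l) i = rtime b (i :: l) := by
  show (if i = i then _ else _) = _
  rw [if_pos rfl]

theorem tat_suffix {L l : List C} (hnd : L.Nodup) (hsuf : l <:+ L) {e : C} (he : e ∈ l) :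
    tat b L e = tat b l e := by
  induction L with
  | nil => rw [List.suffix_nil.mp hsuf]
  | cons x L ih =>
    rcases List.suffix_cons_iff.mp hsuf with h | h
    · rw [h]
    · have hex : e ≠ x := fun hc => (List.nodup_cons.mp hnd).1 (hc ▸ h.subset he)
      show (if e = x then _ else _) = _
      rw [if_neg hex, ih (List.nodup_cons.mp hnd).2 h]

theorem tat_mem {l : List C} {e : C} (he : e ∈ l) :
    ∃ l₂, (e :: l₂) <:+ l ∧ tat b l e = rtime b (e :: l₂) := by
  induction l with
  | nil => simp at he
  | cons x l ih =>
    by_cases hex : e = x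
    · subst hex
      exact ⟨l, List.suffix_refl _, tat_head e l⟩
    · have hel : e ∈ l := by
        rcases List.mem_cons.mp he with h | h
        · exact absurd h hex
        · exact h
      obtain ⟨l₂, hsuf, heq⟩ := ih hel
      refine ⟨l₂, hsuf.trans (List.suffix_cons x l), ?_⟩
      show (if e = x then _ else _) = _
      rw [if_neg hex, heq]

theorem poLoads_le_rtime {M : ℕ} (hu : POUniqueRun b M) :
    ∀ {L : List C}, poValid b L → L.length ≤ M → L ≠ [] → ∀ k,
      poLoads b L k ≤ rtime b L := by
  intro L
  induction L with
  | nil => intro _ _ h; exact absurd rfl h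
  | cons i l ih =>
    intro hv hlen _ k
    rw [poLoads_cons]
    split
    · exact le_refl _
    · cases l with
      | nil => exact le_trans (le_of_eq rfl) (rtime_pos hv).le
      | cons y l' =>
        have hlen' : (y :: l').length ≤ M := by
          simp only [List.length_cons] at hlen ⊢; omega
        refine le_trans (ih (poValid_cons hv).1 hlen' (by simp) k) ?_
        refine (time_lt hu hv ?_).le
        simp only [List.length_cons] at hlen
        omega

theorem preL_cons {c w : C} {β : List C} (h : c ≠ w) :
    preL (c :: β) w = c :: preL β w := by
  show List.takeWhile _ (c :: β) = _
  rw [List.takeWhile_cons, if_pos (by simpa using h)]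
  rfl

theorem MX_eq_zero {f : C → ℚ} {P : List C} (h : ∀ e ∈ P, f e = 0) : MX f P = 0 :=
  le_antisymm (MX_le (fun e he => (h e he).le) le_rfl) (MX_nonneg _ _)

/-- The fundamental load formula: the load of ballot `k` equals the maximum of the
election times of the entries of the ballot preceding its current top candidate. -/
theorem poLoads_eq_MX {M : ℕ} (hu : POUniqueRun b M) :
    ∀ {L : List C}, poValid b L → L.length ≤ M → ∀ k,
      (∀ w, topOf L.toFinset (b k) = some w →
          poLoads b L k = MX (tat b L) (preL (b k) w)) ∧
      (topOf L.toFinset (b k) = none → poLoads b L k = MX (tat b L) (b k)) := by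
  intro L
  induction L with
  | nil =>
    intro _ _ k
    constructor
    · intro w _
      exact (MX_eq_zero (fun e _ => rfl)).symm
    · intro _
      exact (MX_eq_zero (fun e _ => rfl)).symm
  | cons i l ih =>
    intro hv hlen k
    obtain ⟨hvl, hil, hcard, -⟩ := poValid_cons hv
    have hlen' : l.length ≤ M := by simp only [List.length_cons] at hlen; omega
    have ihk := ih hvl hlen' k
    have hnd : (i :: l).Nodup := poValid_nodup hv
    have htL : ∀ e ∈ l, tat b (i :: l) e = tat b l e := fun e he =>
      tat_suffix hnd (List.suffix_cons i l) he
    have htat_le : ∀ e ∈ l, tat b (i :: l) e ≤ rtime b (i :: l) := by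
      intro e he
      obtain ⟨l₂, hsuf, heq⟩ := tat_mem (b := b) he
      rw [htL e he, heq]
      exact time_le_of_suffix hu hv hlen (hsuf.trans (List.suffix_cons i l))
        (List.suffix_refl _) (by simp)
    cases htop : topOf l.toFinset (b k) with
    | none =>
      have hall : ∀ e ∈ b k, e ∈ l.toFinset := topOf_eq_none_iff.mp htop
      have hnew : topOf (i :: l).toFinset (b k) = none := by
        rw [topOf_eq_none_iff]
        intro e he
        rw [List.toFinset_cons]
        exact Finset.mem_insert_of_mem (hall e he)
      have hload : poLoads b (i :: l) k = poLoads b l k := by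
        rw [poLoads_cons, if_neg (by rw [htop]; simp)]
      constructor
      · intro w hw
        rw [hnew] at hw
        cases hw
      · intro _
        rw [hload, ihk.2 htop]
        exact MX_congr (fun e he =>
          (htL e (List.mem_toFinset.mp (hall e he))).symm)
    | some w' =>
      by_cases hw'i : i = w'
      · subst hw'i
        obtain ⟨u, v, hbk, hu2, hw'E⟩ := topOf_eq_some_iff.mp htop
        have hload : poLoads b (i :: l) k = rtime b (i :: l) := by
          rw [poLoads_cons, if_pos htop, rtime_cons]
        have ht0 : 0 ≤ rtime b (i :: l) := (rtime_pos hv).le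
        have htat_le' : ∀ e, e ∈ (i :: l).toFinset → tat b (i :: l) e ≤ rtime b (i :: l) := by
          intro e he
          rw [List.toFinset_cons, Finset.mem_insert] at he
          rcases he with he | he
          · rw [he, tat_head]
          · exact htat_le e (List.mem_toFinset.mp he)
        constructor
        · intro w hw
          obtain ⟨u₂, v₂, hbk2, hu₂, hwE⟩ := topOf_eq_some_iff.mp hw
          have hpre : preL (b k) w = u₂ :=
            preL_eq hbk2 (fun hc => hwE (hu₂ w hc))
          have hiu₂ : i ∈ preL (b k) w := by
            have hiw : i ≠ w := by
              rintro rfl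
              exact hwE (by rw [List.toFinset_cons]; exact Finset.mem_insert_self i _)
            have huw : ∀ e ∈ u, e ≠ w := by
              intro e he
              rintro rfl
              exact hwE (by rw [List.toFinset_cons]; exact Finset.mem_insert_of_mem (hu2 e he))
            rw [hbk, preL_append huw, preL_cons hiw]
            simp
          rw [hload]
          refine (MX_eq hiu₂ (tat_head i l) ?_ ht0).symm
          intro e he
          refine htat_le' e ?_
          rw [hpre] at he
          exact hu₂ e he
        · intro hw
          rw [hload]
          refine (MX_eq (e₀ := i) ?_ (tat_head i l) ?_ ht0).symm
          · rw [hbk]; simp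
          · intro e he
            exact htat_le' e (topOf_eq_none_iff.mp hw e he)
      · have hw'nE : w' ∉ (i :: l).toFinset := by
          rw [List.toFinset_cons, Finset.mem_insert]
          push_neg
          obtain ⟨-, -, -, -, hnot⟩ := topOf_eq_some_iff.mp htop
          exact ⟨fun hc => hw'i hc.symm, hnot⟩
        have hnew : topOf (i :: l).toFinset (b k) = some w' := by
          refine topOf_mono htop (fun e he => ?_) hw'nE
          rw [List.toFinset_cons]
          exact Finset.mem_insert_of_mem he
        have hload : poLoads b (i :: l) k = poLoads b l k := by
          rw [poLoads_cons, if_neg (by rw [htop]; exact fun hc => hw'i (Option.some.inj hc).symm)]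
        obtain ⟨u, v, hbk, hu2, -⟩ := topOf_eq_some_iff.mp htop
        have hpre : preL (b k) w' = u := preL_eq hbk (fun hc => hw'nE (by
          rw [List.toFinset_cons]; exact Finset.mem_insert_of_mem (hu2 w' hc)))
        constructor
        · intro w hw
          rw [hnew] at hw
          injection hw with hww
          subst hww
          rw [hload, ihk.1 w' htop]
          refine MX_congr (fun e he => ?_)
          rw [hpre] at he
          exact (htL e (List.mem_toFinset.mp (hu2 e he))).symm
        · intro hw
          rw [hnew] at hw
          cases hw

/-- Splitting a list according to a threshold on a value function. -/
theorem split_lemma (f : C → ℚ) (t' : ℚ) :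
    ∀ l₀ : List C, ∃ u lp, l₀ = u ++ lp ∧ (∀ e ∈ lp, f e < t') ∧
      (u = [] ∨ ∃ u' c, u = u' ++ [c] ∧ t' ≤ f c) := by
  intro l₀
  induction l₀ with
  | nil => exact ⟨[], [], rfl, by simp, Or.inl rfl⟩
  | cons c₀ rest ih =>
    obtain ⟨u, lp, hrest, hlp, hcase⟩ := ih
    rcases hcase with h | ⟨u', c, hu, hc⟩
    · rw [h, List.nil_append] at hrest
      by_cases hf : f c₀ < t'
      · refine ⟨[], c₀ :: lp, by rw [hrest]; rfl, ?_, Or.inl rfl⟩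
        intro e he
        rcases List.mem_cons.mp he with rfl | he
        · exact hf
        · exact hlp e he
      · exact ⟨[c₀], lp, by rw [hrest]; rfl, hlp, Or.inr ⟨[], c₀, rfl, le_of_not_gt hf⟩⟩
    · exact ⟨c₀ :: u, lp, by rw [hrest]; rfl, hlp, Or.inr ⟨c₀ :: u', c, by rw [hu]; rfl, hc⟩⟩

end Runs

end PO

open PO

/-- Monotonicity of Phragmén's ordered method in the absence of ties: let the ordered
profile `b'` be obtained from `b` by adding new ballots consisting of the single
candidate `A`, inserting `A` into some ballots not containing `A`, or moving `A`
to an earlier position on some ballots containing `A` (others unchanged).  Assume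
no ties occur in any round under either profile.  If `A` is among the `M`
candidates elected on `b`, then `A` is among the `M` candidates elected on `b'`. -/
theorem stmt_8 {C : Type} [Fintype C] [DecidableEq C] (n n' : ℕ) (hnn : n ≤ n')
    (b : Fin n → List C) (b' : Fin n' → List C)
    (hb : ∀ k, (b k).Nodup) (hb' : ∀ k, (b' k).Nodup)
    (hbne : ∀ k, b k ≠ []) (hbne' : ∀ k, b' k ≠ [])
    (A : C) (M : ℕ) (hM1 : 1 ≤ M) (hM2 : M ≤ Fintype.card C)
    (hch : ∀ k : Fin n', if h : (k : ℕ) < n then Favours A (b ⟨k, h⟩) (b' k)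
      else b' k = [A])
    (hu : POUniqueRun b M) (hu' : POUniqueRun b' M)
    (h : ∃ S : Finset C, POOutcome b M S ∧ A ∈ S) :
    ∀ S' : Finset C, POOutcome b' M S' → A ∈ S' := by
  rintro S' ⟨l', hvl', hlenl', rfl⟩
  by_contra hAS'
  have hA'notin : A ∉ l' := fun hc => hAS' (List.mem_toFinset.mpr hc)
  obtain ⟨S, ⟨lv, hvlv, hlenlv, hSlv⟩, hAS⟩ := h
  have hAlv : A ∈ lv := List.mem_toFinset.mp (hSlv ▸ hAS)
  obtain ⟨u₀, l₀, rfl⟩ : ∃ u₀ l₀, lv = u₀ ++ A :: l₀ := by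
    obtain ⟨s, t, hst⟩ := List.append_of_mem hAlv
    exact ⟨s, t, hst⟩
  have hvlA : poValid b (A :: l₀) := poValid_of_suffix ⟨u₀, rfl⟩ hvlv
  have hndlA : (A :: l₀).Nodup := poValid_nodup hvlA
  have hAl₀ : A ∉ l₀ := (List.nodup_cons.mp hndlA).1
  have hmM : (A :: l₀).length ≤ M := by
    rw [← hlenlv]
    simp only [List.length_append, List.length_cons]
    omega
  set lA : List C := A :: l₀ with hlA
  set tA : ℚ := rtime b lA with htA
  have htApos : 0 < tA := rtime_pos hvlA
  have hMl' : l'.length ≤ M := le_of_eq hlenl'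
  -- the per-election-time comparison function on the v-side
  -- Claim (g): the pigeonhole/ledger argument
  have gkey : ∀ l₁ : List C, l₁ <:+ l' → (∀ c ∈ l₁, c ∈ l₀) →
      (∀ c l₂, (c :: l₂) <:+ l₁ → tat b lA c ≤ rtime b' (c :: l₂)) →
      ∃ x, x ∉ l₁ ∧ 0 < (poCounted b' l₁.toFinset x).card ∧
        poT b' (poLoads b' l₁) l₁.toFinset x ≤ tA := by
    intro l₁ hsuf hINV1 hINV2
    have hvl₁ : poValid b' l₁ := poValid_of_suffix hsuf hvl'
    have hndl₁ : l₁.Nodup := poValid_nodup hvl₁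
    have hlenl₁ : l₁.length ≤ M := le_trans hsuf.length_le hMl'
    have hAl₁ : A ∉ l₁ := fun hc => hA'notin (hsuf.subset hc)
    have hAl₁F : A ∉ l₁.toFinset := fun hc => hAl₁ (List.mem_toFinset.mp hc)
    have hsubF : l₁.toFinset ⊆ lA.toFinset := by
      intro c hc
      rw [List.mem_toFinset] at hc ⊢
      exact List.mem_cons_of_mem A (hINV1 c hc)
    have hkey_e : ∀ e ∈ l₁.toFinset, tat b lA e ≤ tat b' l₁ e := by
      intro e he
      obtain ⟨l₂, hsuf₂, heq⟩ := tat_mem (b := b') (List.mem_toFinset.mp he)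
      rw [heq]
      exact hINV2 e l₂ hsuf₂
    set W : Finset C := lA.toFinset \ l₁.toFinset with hW
    have hAW : A ∈ W := by
      rw [hW, Finset.mem_sdiff]
      exact ⟨by rw [List.mem_toFinset]; exact (List.mem_cons_self (a := A) (l := l₀)), hAl₁F⟩
    have hcardlA : lA.toFinset.card = lA.length := List.toFinset_card_of_nodup hndlA
    have hcardl₁ : l₁.toFinset.card = l₁.length := List.toFinset_card_of_nodup hndl₁
    have hl₁le : l₁.length ≤ lA.length := by
      rw [← hcardlA, ← hcardl₁]
      exact Finset.card_le_card hsubF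
    have hWcard : W.card = lA.length - l₁.length := by
      rw [hW, Finset.card_sdiff_of_subset hsubF, hcardlA, hcardl₁]
    set R : Fin n' → ℚ := fun k => if hk : (k : ℕ) < n then poLoads b lA ⟨k, hk⟩ else 0
      with hR
    have hsumR : ∑ k, R k = (lA.length : ℚ) := by
      rw [← sum_poLoads hvlA]
      rw [show ∑ k, poLoads b lA k
          = ∑ k ∈ Finset.univ.map ⟨Fin.castLE hnn, Fin.castLE_injective hnn⟩, R k by
        rw [Finset.sum_map]
        refine Finset.sum_congr rfl (fun k _ => ?_)
        show poLoads b lA k = R (Fin.castLE hnn k)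
        rw [hR]
        simp only []
        rw [dif_pos (show ((Fin.castLE hnn k : Fin n') : ℕ) < n from k.isLt)]
        exact congrArg (poLoads b lA) (Fin.ext rfl)]
      refine (Finset.sum_subset (Finset.subset_univ _) (fun k _ hk => ?_)).symm
      rw [hR]
      simp only []
      rw [dif_neg]
      intro hkn
      exact hk (Finset.mem_map.mpr ⟨⟨(k : ℕ), hkn⟩, Finset.mem_univ _, Fin.ext rfl⟩)
    have hsumr' : ∑ k, poLoads b' l₁ k = (l₁.length : ℚ) := sum_poLoads hvl₁
    set Tset : Finset (Fin n') := W.biUnion (fun x => poCounted b' l₁.toFinset x)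
      with hTset
    have hmemT : ∀ k, k ∈ Tset ↔ ∃ x ∈ W, topOf l₁.toFinset (b' k) = some x := by
      intro k
      rw [hTset, Finset.mem_biUnion]
      constructor
      · rintro ⟨x, hx, hk⟩
        exact ⟨x, hx, (Finset.mem_filter.mp hk).2⟩
      · rintro ⟨x, hx, hk⟩
        exact ⟨x, hx, Finset.mem_filter.mpr ⟨Finset.mem_univ _, hk⟩⟩
    -- off Tset, the v-load is at most the v'-load
    have hoff : ∀ k, k ∉ Tset → R k ≤ poLoads b' l₁ k := by
      intro k hk
      by_cases hkn : (k : ℕ) < n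
      · set kk : Fin n := ⟨(k : ℕ), hkn⟩ with hkk
        have hfav : Favours A (b kk) (b' k) := by
          have := hch k
          rwa [dif_pos hkn] at this
        have hRk : R k = poLoads b lA kk := by rw [hR]; simp only []; rw [dif_pos hkn]
        cases hbtop : topOf l₁.toFinset (b' k) with
        | none =>
          have hall : ∀ e ∈ b' k, e ∈ l₁.toFinset := topOf_eq_none_iff.mp hbtop
          have hAbk : A ∉ b' k := fun hc => hAl₁F (hall A hc)
          have hbeq : b' k = b kk := favours_eq hfav hAbk
          have htopv : topOf lA.toFinset (b kk) = none := by
            rw [topOf_eq_none_iff]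
            intro e he
            exact hsubF (hall e (by rw [hbeq]; exact he))
          rw [hRk, ((poLoads_eq_MX hu hvlA hmM kk).2 htopv),
            ((poLoads_eq_MX hu' hvl₁ hlenl₁ k).2 hbtop), hbeq]
          refine MX_mono (fun e he => hkey_e e (hall e (by rw [hbeq]; exact he)))
        | some d =>
          have hdW : d ∉ W := by
            intro hc
            exact hk ((hmemT k).mpr ⟨d, hc, hbtop⟩)
          have hdl₁ : d ∉ l₁.toFinset := by
            obtain ⟨-, -, -, -, hnot⟩ := topOf_eq_some_iff.mp hbtop
            exact hnot
          have hdA : d ≠ A := by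
            rintro rfl
            exact hdW hAW
          have hdlA : d ∉ lA.toFinset := by
            intro hc
            exact hdW (by rw [hW, Finset.mem_sdiff]; exact ⟨hc, hdl₁⟩)
          obtain ⟨hpreE, hpreEq, htrans⟩ := transfer hfav hAl₁F hbtop hdA
          have htopv : topOf lA.toFinset (b kk) = some d := htrans _ hsubF hdlA
          rw [hRk, ((poLoads_eq_MX hu hvlA hmM kk).1 d htopv),
            ((poLoads_eq_MX hu' hvl₁ hlenl₁ k).1 d hbtop), hpreEq]
          exact MX_mono (fun e he => hkey_e e (hpreE e he))
      · rw [hR]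
        simp only []
        rw [dif_neg hkn]
        exact poLoads_nonneg l₁ k
    -- on Tset (indeed everywhere), R k ≤ tA
    have hRtA : ∀ k, R k ≤ tA := by
      intro k
      rw [hR]
      simp only []
      split
      · exact poLoads_le_rtime hu hvlA hmM (by rw [hlA]; simp) _
      · exact htApos.le
    -- ledger
    have hledger : (lA.length : ℚ) - l₁.length ≤ ∑ k ∈ Tset, (tA - poLoads b' l₁ k) := by
      have e1 : ∑ k, (R k - poLoads b' l₁ k) = (lA.length : ℚ) - l₁.length := by
        rw [Finset.sum_sub_distrib, hsumR, hsumr']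
      have e2 : ∑ k, (R k - poLoads b' l₁ k)
          = ∑ k ∈ Tset, (R k - poLoads b' l₁ k)
            + ∑ k ∈ Tsetᶜ, (R k - poLoads b' l₁ k) :=
        (Finset.sum_add_sum_compl Tset _).symm
      have e3 : ∑ k ∈ Tsetᶜ, (R k - poLoads b' l₁ k) ≤ 0 := by
        refine Finset.sum_nonpos (fun k hk => ?_)
        have := hoff k (Finset.mem_compl.mp hk)
        linarith
      have e4 : ∑ k ∈ Tset, (R k - poLoads b' l₁ k)
          ≤ ∑ k ∈ Tset, (tA - poLoads b' l₁ k) := by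
        refine Finset.sum_le_sum (fun k _ => ?_)
        have := hRtA k
        linarith
      linarith
    have hdisj : (W : Set C).PairwiseDisjoint (fun x => poCounted b' l₁.toFinset x) := by
      intro x hx y hy hxy
      simp only [Function.onFun]
      rw [Finset.disjoint_left]
      intro k hkx hky
      exact hxy (Option.some.inj ((Finset.mem_filter.mp hkx).2.symm.trans
        (Finset.mem_filter.mp hky).2))
    have hsplit : ∑ k ∈ Tset, (tA - poLoads b' l₁ k)
        = ∑ x ∈ W, ∑ k ∈ poCounted b' l₁.toFinset x, (tA - poLoads b' l₁ k) := by
      rw [hTset, Finset.sum_biUnion hdisj]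
    by_contra hcon
    push_neg at hcon
    have hxlt : ∀ x ∈ W, ∑ k ∈ poCounted b' l₁.toFinset x, (tA - poLoads b' l₁ k) < 1 := by
      intro x hx
      have hxnl₁ : x ∉ l₁ := by
        rw [hW, Finset.mem_sdiff] at hx
        exact fun hc => hx.2 (List.mem_toFinset.mpr hc)
      by_cases hcard : 0 < (poCounted b' l₁.toFinset x).card
      · have hT := hcon x hxnl₁ hcard
        have := poT_mul (b := b') (r := poLoads b' l₁) (E := l₁.toFinset) (i := x) hcard
        rw [Finset.sum_sub_distrib, Finset.sum_const, nsmul_eq_mul]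
        have hcpos : (0:ℚ) < ((poCounted b' l₁.toFinset x).card : ℚ) := by exact_mod_cast hcard
        nlinarith [hT, hcpos, this]
      · have : poCounted b' l₁.toFinset x = ∅ := by
          rw [← Finset.card_eq_zero]
          omega
        rw [this]
        simp
    have hsum_lt : ∑ x ∈ W, ∑ k ∈ poCounted b' l₁.toFinset x, (tA - poLoads b' l₁ k)
        < (W.card : ℚ) := by
      have := Finset.sum_lt_sum_of_nonempty ⟨A, hAW⟩ hxlt
      simpa using this
    have hWQ : (W.card : ℚ) = (lA.length : ℚ) - l₁.length := by
      rw [hWcard]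
      push_cast [Nat.cast_sub hl₁le]
      ring
    rw [hsplit] at hledger
    rw [hWQ] at hsum_lt
    linarith
  -- the induction step
  have step : ∀ w l₂, (w :: l₂) <:+ l' → (∀ c ∈ l₂, c ∈ l₀) →
      (∀ c l₃, (c :: l₃) <:+ l₂ → tat b lA c ≤ rtime b' (c :: l₃)) →
      (∀ c ∈ w :: l₂, c ∈ l₀) ∧
        (∀ c l₃, (c :: l₃) <:+ (w :: l₂) → tat b lA c ≤ rtime b' (c :: l₃)) := by
    intro w l₂ hsuf hINV1 hINV2
    have hwl' : w ∈ l' := hsuf.subset ((List.mem_cons_self (a := w) (l := l₂)))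
    have hwA : w ≠ A := fun hc => hA'notin (hc ▸ hwl')
    have hvwl₂ : poValid b' (w :: l₂) := poValid_of_suffix hsuf hvl'
    obtain ⟨hvl₂, hwl₂, hcardw, hminw⟩ := poValid_cons hvwl₂
    set t' : ℚ := rtime b' (w :: l₂) with ht'
    have ht'pos : 0 < t' := rtime_pos hvwl₂
    obtain ⟨x, hxl₂, hxcard, hxle⟩ :=
      gkey l₂ ((List.suffix_cons w l₂).trans hsuf) hINV1 hINV2
    have ht'le : t' ≤ tA := le_trans (hminw x hxl₂ hxcard) hxle
    have hAl₂ : A ∉ l₂ := fun hc => hA'notin (hsuf.subset (List.mem_cons_of_mem _ hc))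
    have hAl₂F : A ∉ l₂.toFinset := fun hc => hAl₂ (List.mem_toFinset.mp hc)
    have hkey_e : ∀ e ∈ l₂.toFinset, tat b lA e ≤ tat b' l₂ e := by
      intro e he
      obtain ⟨l₃, hsuf₃, heq⟩ := tat_mem (b := b') (List.mem_toFinset.mp he)
      rw [heq]
      exact hINV2 e l₃ hsuf₃
    have hgood : w ∈ l₀ ∧ tat b lA w ≤ t' := by
      by_contra hbad
      obtain ⟨u, lp, hl₀eq, hlpsmall, hucase⟩ := split_lemma (tat b lA) t' l₀
      have hlpsuf : lp <:+ lA := ⟨A :: u, by rw [hlA, hl₀eq]; rfl⟩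
      have hvlp : poValid b lp := poValid_of_suffix hlpsuf hvlA
      have hlplen : lp.length < M := by
        have h1 : lA.length = l₀.length + 1 := by rw [hlA]; rfl
        have h2 : l₀.length = u.length + lp.length := by rw [hl₀eq]; simp
        omega
      have hEsub : ∀ e ∈ l₂, e ∈ lp := by
        intro e he
        obtain ⟨l₃, hsuf₃, heq₃⟩ := tat_mem (b := b') he
        have h1 : tat b lA e ≤ rtime b' (e :: l₃) := hINV2 e l₃ hsuf₃
        have h2 : rtime b' (e :: l₃) < t' := by
          rw [ht']
          refine time_lt_of_suffix hu' hvl' hMl' (w :: l₂) (e :: l₃)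
            (hsuf₃.trans (List.suffix_cons w l₂)) hsuf (by simp) ?_
          intro hc
          have := congrArg List.length hc
          have hle := hsuf₃.length_le
          simp only [List.length_cons] at this hle
          omega
        have hvte : tat b lA e < t' := lt_of_le_of_lt h1 h2
        have hel₀ : e ∈ l₀ := hINV1 e he
        rw [hl₀eq] at hel₀
        rcases List.mem_append.mp hel₀ with heu | help
        · exfalso
          rcases hucase with hnil | ⟨u', c, hueq, hct⟩
          · rw [hnil] at heu; simp at heu
          · have hclpsuf : (c :: lp) <:+ lA := ⟨A :: u', by rw [hlA, hl₀eq, hueq]; simp⟩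
            have helA : e ∈ lA := by
              rw [hlA]
              exact List.mem_cons_of_mem _ (by rw [hl₀eq]; exact List.mem_append_left _ heu)
            obtain ⟨l₄, hsuf₄, heq₄⟩ := tat_mem (b := b) helA
            have henlp : e ∉ lp := by
              intro hc
              have hnd₀ : l₀.Nodup := (List.nodup_cons.mp hndlA).2
              rw [hl₀eq] at hnd₀
              exact (List.disjoint_of_nodup_append hnd₀) heu hc
            have hlenlp : lp.length < (e :: l₄).length := by
              by_contra hlc
              push_neg at hlc
              have := suffix_of_suffix_le hsuf₄ hlpsuf hlc
              exact henlp (this.subset ((List.mem_cons_self (a := e) (l := l₄))))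
            have hclpsuf₄ : (c :: lp) <:+ (e :: l₄) :=
              suffix_of_suffix_le hclpsuf hsuf₄
                (by simp only [List.length_cons] at hlenlp ⊢; omega)
            have hvtc : tat b lA c = rtime b (c :: lp) := by
              rw [tat_suffix hndlA hclpsuf ((List.mem_cons_self (a := c) (l := lp))), tat_head]
            have : tat b lA c ≤ tat b lA e := by
              rw [hvtc, heq₄]
              exact time_le_of_suffix hu hvlA hmM hclpsuf₄ hsuf₄ (by simp)
            linarith [hct, hvte, this]
        · exact help
      have hEsubF : l₂.toFinset ⊆ lp.toFinset := by
        intro e he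
        rw [List.mem_toFinset] at he ⊢
        exact hEsub e he
      have hwlp : w ∉ lp := by
        intro hc
        exact hbad ⟨by rw [hl₀eq]; exact List.mem_append_right _ hc, (hlpsmall w hc).le⟩
      have hwlpF : w ∉ lp.toFinset := fun hc => hwlp (List.mem_toFinset.mp hc)
      have hlenl₂ : l₂.length ≤ M :=
        le_trans ((List.suffix_cons w l₂).trans hsuf).length_le hMl'
      have hvl₂' : poValid b' l₂ := hvl₂
      -- ballots counted for w in the v' run transfer to the v run at state lp
      have hbtrans : ∀ k ∈ poCounted b' l₂.toFinset w, ∃ hkn : (k : ℕ) < n,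
          topOf lp.toFinset (b ⟨(k : ℕ), hkn⟩) = some w ∧
            poLoads b lp ⟨(k : ℕ), hkn⟩ ≤ poLoads b' l₂ k := by
        intro k hk
        have htopk : topOf l₂.toFinset (b' k) = some w := (Finset.mem_filter.mp hk).2
        have hkn : (k : ℕ) < n := by
          by_contra hkn
          have hbk : b' k = [A] := by
            have := hch k
            rwa [dif_neg hkn] at this
          rw [hbk] at htopk
          rw [show topOf l₂.toFinset [A] = some A by
            rw [topOf_eq_some_iff]
            exact ⟨[], [], rfl, by simp, hAl₂F⟩] at htopk
          exact hwA (Option.some.inj htopk).symm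
        refine ⟨hkn, ?_, ?_⟩
        · have hfav : Favours A (b ⟨(k : ℕ), hkn⟩) (b' k) := by
            have := hch k
            rwa [dif_pos hkn] at this
          obtain ⟨hpreE, hpreEq, htrans⟩ := transfer hfav hAl₂F htopk hwA
          exact htrans _ hEsubF hwlpF
        · have hfav : Favours A (b ⟨(k : ℕ), hkn⟩) (b' k) := by
            have := hch k
            rwa [dif_pos hkn] at this
          obtain ⟨hpreE, hpreEq, htrans⟩ := transfer hfav hAl₂F htopk hwA
          have htopv : topOf lp.toFinset (b ⟨(k : ℕ), hkn⟩) = some w :=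
            htrans _ hEsubF hwlpF
          rw [((poLoads_eq_MX hu hvlp hlplen.le _).1 w htopv),
            ((poLoads_eq_MX hu' hvl₂ hlenl₂ k).1 w htopk), hpreEq]
          refine MX_mono (fun e he => ?_)
          have hel₂ : e ∈ l₂.toFinset := hpreE e he
          have h1 : tat b lA e = tat b lp e :=
            tat_suffix hndlA hlpsuf (hEsub e (List.mem_toFinset.mp hel₂))
          rw [← h1]
          exact hkey_e e hel₂
      have hsum1 : ∑ k ∈ poCounted b' l₂.toFinset w, (t' - poLoads b' l₂ k) = 1 := by
        rw [Finset.sum_sub_distrib, Finset.sum_const, nsmul_eq_mul]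
        have hmul := poT_mul (b := b') (r := poLoads b' l₂) (E := l₂.toFinset) (i := w) hcardw
        have ht'val : t' = poT b' (poLoads b' l₂) l₂.toFinset w := by rw [ht', rtime_cons]
        rw [ht'val]
        linarith
      set F : Fin n' → ℚ := fun k => if hk : (k : ℕ) < n then t' - poLoads b lp ⟨k, hk⟩ else t'
        with hF
      have hFk : ∀ k ∈ poCounted b' l₂.toFinset w, t' - poLoads b' l₂ k ≤ F k := by
        intro k hk
        obtain ⟨hkn, -, hle⟩ := hbtrans k hk
        rw [hF]
        simp only []
        rw [dif_pos hkn]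
        linarith
      have hsub2 : poCounted b' l₂.toFinset w ⊆
          (poCounted b lp.toFinset w).map ⟨Fin.castLE hnn, Fin.castLE_injective hnn⟩ := by
        intro k hk
        obtain ⟨hkn, htopv, -⟩ := hbtrans k hk
        exact Finset.mem_map.mpr ⟨⟨(k : ℕ), hkn⟩,
          Finset.mem_filter.mpr ⟨Finset.mem_univ _, htopv⟩, Fin.ext rfl⟩
      have hlp_load_le : ∀ kk : Fin n, poLoads b lp kk ≤ t' := by
        intro kk
        rcases hlp0 : lp with _ | ⟨c₁, lp'⟩
        · rw [show poLoads b [] kk = 0 from rfl]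
          exact ht'pos.le
        · have hv1 : poValid b (c₁ :: lp') := by rw [← hlp0]; exact hvlp
          have hlen1 : (c₁ :: lp').length ≤ M := by rw [← hlp0]; exact hlplen.le
          have hle1 : poLoads b (c₁ :: lp') kk ≤ rtime b (c₁ :: lp') :=
            poLoads_le_rtime hu hv1 hlen1 (by simp) kk
          have hrt : tat b lA c₁ = rtime b (c₁ :: lp') := by
            rw [tat_suffix hndlA (by rw [← hlp0]; exact hlpsuf)
              ((List.mem_cons_self (a := c₁) (l := lp'))), tat_head]
          have hsm : tat b lA c₁ < t' := hlpsmall c₁ (by rw [hlp0]; simp)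
          linarith
      have hchain : (1 : ℚ) ≤ ∑ kk ∈ poCounted b lp.toFinset w, (t' - poLoads b lp kk) := by
        have h2 : ∑ k ∈ poCounted b' l₂.toFinset w, (t' - poLoads b' l₂ k)
            ≤ ∑ k ∈ poCounted b' l₂.toFinset w, F k := Finset.sum_le_sum hFk
        have h3 : ∑ k ∈ poCounted b' l₂.toFinset w, F k
            ≤ ∑ k ∈ (poCounted b lp.toFinset w).map
                ⟨Fin.castLE hnn, Fin.castLE_injective hnn⟩, F k := by
          refine Finset.sum_le_sum_of_subset_of_nonneg hsub2 (fun k _ _ => ?_)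
          rw [hF]
          simp only []
          split
          · next hkn => linarith [hlp_load_le ⟨(k : ℕ), hkn⟩]
          · exact ht'pos.le
        have h4 : ∑ k ∈ (poCounted b lp.toFinset w).map
              ⟨Fin.castLE hnn, Fin.castLE_injective hnn⟩, F k
            = ∑ kk ∈ poCounted b lp.toFinset w, (t' - poLoads b lp kk) := by
          rw [Finset.sum_map]
          refine Finset.sum_congr rfl (fun kk _ => ?_)
          show F (Fin.castLE hnn kk) = _
          rw [hF]
          simp only []
          rw [dif_pos (show ((Fin.castLE hnn kk : Fin n') : ℕ) < n from kk.isLt)]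
          exact congrArg (fun z => t' - z) (congrArg (poLoads b lp) (Fin.ext rfl))
        rw [hsum1] at h2
        linarith
      have hcardlp : 0 < (poCounted b lp.toFinset w).card := by
        obtain ⟨k, hk⟩ := Finset.card_pos.mp hcardw
        obtain ⟨hkn, htopv, -⟩ := hbtrans k hk
        exact Finset.card_pos.mpr ⟨⟨(k : ℕ), hkn⟩,
          Finset.mem_filter.mpr ⟨Finset.mem_univ _, htopv⟩⟩
      have hpoTw : poT b (poLoads b lp) lp.toFinset w ≤ t' := by
        rw [poT, div_le_iff₀ (by exact_mod_cast hcardlp)]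
        rw [Finset.sum_sub_distrib, Finset.sum_const, nsmul_eq_mul] at hchain
        linarith
      obtain ⟨y, -, huniq⟩ := hu lp hvlp hlplen
      rcases hucase with hnil | ⟨u', c, hueq, hct⟩
      · have hlAlp : lA = A :: lp := by rw [hlA, hl₀eq, hnil]; rfl
        have hvAlp : poValid b (A :: lp) := by rw [← hlAlp]; exact hvlA
        obtain ⟨-, hAnlp, hcardA, hminA⟩ := poValid_cons hvAlp
        have htAval : tA = poT b (poLoads b lp) lp.toFinset A := by
          rw [htA, hlAlp, rtime_cons]
        have hQA : A ∉ lp ∧ 0 < (poCounted b lp.toFinset A).card ∧ ∀ j ∉ lp,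
            0 < (poCounted b lp.toFinset j).card →
              poT b (poLoads b lp) lp.toFinset A ≤ poT b (poLoads b lp) lp.toFinset j :=
          ⟨hAnlp, hcardA, hminA⟩
        have hQw : w ∉ lp ∧ 0 < (poCounted b lp.toFinset w).card ∧ ∀ j ∉ lp,
            0 < (poCounted b lp.toFinset j).card →
              poT b (poLoads b lp) lp.toFinset w ≤ poT b (poLoads b lp) lp.toFinset j := by
          refine ⟨hwlp, hcardlp, fun j hj hcj => ?_⟩
          have hAw := hminA w hwlp hcardlp
          have hAj := hminA j hj hcj
          rw [← htAval] at hAw hAj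
          linarith
        exact hwA ((huniq w hQw).trans (huniq A hQA).symm)
      · have hclpsuf : (c :: lp) <:+ lA := ⟨A :: u', by rw [hlA, hl₀eq, hueq]; simp⟩
        obtain ⟨-, hcnlp, hcardc, hminc⟩ := poValid_cons (poValid_of_suffix hclpsuf hvlA)
        have hvtc : tat b lA c = poT b (poLoads b lp) lp.toFinset c := by
          rw [tat_suffix hndlA hclpsuf ((List.mem_cons_self (a := c) (l := lp))), tat_head, rtime_cons]
        have hQc : c ∉ lp ∧ 0 < (poCounted b lp.toFinset c).card ∧ ∀ j ∉ lp,
            0 < (poCounted b lp.toFinset j).card →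
              poT b (poLoads b lp) lp.toFinset c ≤ poT b (poLoads b lp) lp.toFinset j :=
          ⟨hcnlp, hcardc, hminc⟩
        have hQw : w ∉ lp ∧ 0 < (poCounted b lp.toFinset w).card ∧ ∀ j ∉ lp,
            0 < (poCounted b lp.toFinset j).card →
              poT b (poLoads b lp) lp.toFinset w ≤ poT b (poLoads b lp) lp.toFinset j := by
          refine ⟨hwlp, hcardlp, fun j hj hcj => ?_⟩
          have hcw := hminc w hwlp hcardlp
          have hcj' := hminc j hj hcj
          linarith [hct, hvtc.le, hvtc.ge, hpoTw]
        have hwc : w = c := (huniq w hQw).trans (huniq c hQc).symm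
        refine hbad ⟨?_, ?_⟩
        · rw [hwc, hl₀eq, hueq]
          exact List.mem_append_left _ (by simp)
        · rw [hwc, hvtc]
          exact le_trans (hminc w hwlp hcardlp) hpoTw
    constructor
    · intro c hc
      rcases List.mem_cons.mp hc with rfl | hc
      · exact hgood.1
      · exact hINV1 c hc
    · intro c l₃ hsuf₃
      rcases List.suffix_cons_iff.mp hsuf₃ with heq | hsuf₃'
      · rw [List.cons.injEq] at heq
        obtain ⟨rfl, rfl⟩ := heq
        exact hgood.2
      · exact hINV2 c l₃ hsuf₃'
  -- the induction over the rounds of the v' run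
  have main : ∀ j, j ≤ M → (∀ c ∈ l'.drop (M - j), c ∈ l₀) ∧
      (∀ c l₂, (c :: l₂) <:+ l'.drop (M - j) → tat b lA c ≤ rtime b' (c :: l₂)) := by
    intro j
    induction j with
    | zero =>
      intro _
      rw [Nat.sub_zero, ← hlenl', List.drop_length]
      refine ⟨by simp, fun c l₂ hsuf => absurd hsuf (by simp)⟩
    | succ j ih =>
      intro hjM
      have hd : M - (j+1) < l'.length := by rw [hlenl']; omega
      have hdec : l'.drop (M - (j+1)) = l'[M - (j+1)] :: l'.drop (M - j) := by
        have harr : M - (j+1) + 1 = M - j := by omega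
        rw [List.drop_eq_getElem_cons hd, harr]
      have hsufd : (l'[M - (j+1)] :: l'.drop (M - j)) <:+ l' := by
        rw [← hdec]
        exact List.drop_suffix _ _
      obtain ⟨ih1, ih2⟩ := ih (by omega)
      rw [hdec]
      exact step _ _ hsufd ih1 ih2
  obtain ⟨hfinal, -⟩ := main M le_rfl
  rw [Nat.sub_self, List.drop_zero] at hfinal
  have hc1 : l'.toFinset.card = M := by
    rw [List.toFinset_card_of_nodup (poValid_nodup hvl'), hlenl']
  have hsubF : l'.toFinset ⊆ l₀.toFinset := by
    intro c hc
    rw [List.mem_toFinset] at hc ⊢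
    exact hfinal c hc
  have hc2 : l₀.toFinset.card ≤ l₀.length := l₀.toFinset_card_le
  have hlen₀ : l₀.length + 1 ≤ M := by
    have : lA.length = l₀.length + 1 := by rw [hlA]; rfl
    omega
  have := Finset.card_le_card hsubF
  omega
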